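/- Let f : X → X be a homeomorphism of a locally compact metric space and let x₀ ∈ X be an attracting fixed point for f. If g : X → X is a homeomorphism that commutes with f and fixes x₀, then there exists m > 0 such that x₀ is an attracting fixed point for the homeomorphism h = fᵐ ∘ g. -/

import Mathlib

open Filter

/-- `x₀` is an attracting fixed point for `f`: it is fixed and has a compact
neighborhood `W` whose forward iterates converge to `{x₀}` in the Hausdorff
topology, i.e. eventually enter every neighborhood of `x₀`. -/
def IsAttractingFixedPt {X : Type*} [TopologicalSpace X] (f : X → X) (x₀ : X) : Prop :=
  f x₀ = x₀ ∧ ∃ W : Set X, IsCompact W ∧ W ∈ nhds x₀ ∧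
    ∀ N ∈ nhds x₀, ∀ᶠ n : ℕ in atTop, f^[n] '' W ⊆ N

/-- The basin of attraction of `x₀` with respect to `f`:
the set of points whose forward orbit converges to `x₀`. -/
def basin {X : Type*} [TopologicalSpace X] (f : X → X) (x₀ : X) : Set X :=
  {x | Tendsto (fun n => f^[n] x) atTop (nhds x₀)}

/-- If `x₀` is an attracting fixed point for a homeomorphism `f` of a locally compact
metric space and `g` is a homeomorphism commuting with `f` that fixes `x₀`, then
there is `m > 0` such that `x₀` is an attracting fixed point for `h = fᵐ ∘ g`. -/
theorem stmt_6 {X : Type*} [MetricSpace X] [LocallyCompactSpace X]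
    (f g : X ≃ₜ X) (x₀ : X) (hf : IsAttractingFixedPt (⇑f) x₀)
    (hcomm : ∀ x, f (g x) = g (f x)) (hgfix : g x₀ = x₀) :
    ∃ m : ℕ, 0 < m ∧ IsAttractingFixedPt ((⇑f)^[m] ∘ ⇑g) x₀ := by
  obtain ⟨hfix, W, hWc, hWn, hW⟩ := hf
  -- every point of W lies in the basin of f
  have hbasin : ∀ x ∈ W, Tendsto (fun n => (⇑f)^[n] x) atTop (nhds x₀) := by
    intro x hx
    rw [tendsto_def]
    intro s hs
    filter_upwards [hW s hs] with n hn
    exact hn ⟨x, hx, rfl⟩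
  -- the g-image of W also lies in the basin of f
  have hgW : ∀ y ∈ (⇑g) '' W, Tendsto (fun n => (⇑f)^[n] y) atTop (nhds x₀) := by
    rintro y ⟨x, hx, rfl⟩
    have hc : ∀ n, (⇑f)^[n] (g x) = g ((⇑f)^[n] x) := by
      intro n
      induction n with
      | zero => simp
      | succ k ih =>
        rw [Function.iterate_succ_apply', Function.iterate_succ_apply', ih, hcomm]
    simp only [hc]
    have := (g.continuous.tendsto x₀).comp (hbasin x hx)
    rwa [hgfix] at this
  -- uniform attraction on compact subsets of the basin
  have huniform : ∀ K : Set X, IsCompact K →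
      (∀ y ∈ K, Tendsto (fun n => (⇑f)^[n] y) atTop (nhds x₀)) →
      ∀ N ∈ nhds x₀, ∀ᶠ n : ℕ in atTop, (⇑f)^[n] '' K ⊆ N := by
    intro K hK hKb N hN
    rcases eventually_atTop.mp (hW N hN) with ⟨n₀, hn₀⟩
    have hint : interior W ∈ nhds x₀ := interior_mem_nhds.mpr hWn
    have hmem : ∀ y ∈ K, ∃ n, (⇑f)^[n] y ∈ interior W := by
      intro y hy
      have h1 : ∀ᶠ n : ℕ in atTop, (⇑f)^[n] y ∈ interior W := (hKb y hy) hint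
      exact h1.exists
    choose! ny hny using hmem
    have hcov : K ⊆ ⋃ y : K, (⇑f)^[ny y] ⁻¹' interior W := by
      intro x hx
      exact Set.mem_iUnion.mpr ⟨⟨x, hx⟩, hny x hx⟩
    obtain ⟨t, ht⟩ := hK.elim_finite_subcover
      (fun y : K => (⇑f)^[ny y] ⁻¹' interior W)
      (fun y => (isOpen_interior).preimage (f.continuous.iterate _)) hcov
    set M := t.sup fun i => ny i with hM
    rw [eventually_atTop]
    refine ⟨n₀ + M, ?_⟩
    rintro n hn _ ⟨x, hx, rfl⟩
    obtain ⟨i, hit, hxi⟩ := Set.mem_iUnion₂.mp (ht hx)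
    have hkM : ny i ≤ M := Finset.le_sup (f := fun i : ↥K => ny ↑i) hit
    have hkn : ny i ≤ n := le_trans (le_trans hkM (Nat.le_add_left _ _)) hn
    have hsplit : (⇑f)^[n] x = (⇑f)^[n - ny i] ((⇑f)^[ny i] x) := by
      conv_lhs => rw [← Nat.sub_add_cancel hkn]
      exact Function.iterate_add_apply _ _ _ _
    rw [hsplit]
    have hn₀le : n₀ ≤ n - ny i := by omega
    exact hn₀ _ hn₀le ⟨(⇑f)^[ny i] x, interior_subset hxi, rfl⟩
  -- choose n₁ such that f^[n] (g '' W) ⊆ W for n ≥ n₁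
  rcases eventually_atTop.mp
    (huniform ((⇑g) '' W) (hWc.image g.continuous) hgW W hWn) with ⟨n₁, hn₁⟩
  refine ⟨n₁ + 1, Nat.succ_pos _, ?_, W, hWc, hWn, ?_⟩
  · show (⇑f)^[n₁ + 1] (g x₀) = x₀
    rw [hgfix, Function.iterate_fixed hfix]
  · intro N hN
    set h' : X → X := (⇑f)^[n₁] ∘ ⇑g with hh'
    have hWinv : ∀ k, h'^[k] '' W ⊆ W := by
      intro k
      induction k with
      | zero => simp
      | succ k ih =>
        rw [Function.iterate_succ', Set.image_comp]
        refine (Set.image_mono ih).trans ?_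
        rw [hh', Set.image_comp]
        exact hn₁ n₁ le_rfl
    have hcommfh : Function.Commute (⇑f) h' := by
      intro x
      show f (h' x) = h' (f x)
      simp only [hh', Function.comp_apply]
      rw [← hcomm, ← Function.iterate_succ_apply, Function.iterate_succ_apply']
    have hiter : ∀ n : ℕ, ((⇑f)^[n₁ + 1] ∘ ⇑g)^[n] = (⇑f)^[n] ∘ h'^[n] := by
      intro n
      have hdec : (⇑f)^[n₁ + 1] ∘ ⇑g = ⇑f ∘ h' := by
        funext x
        simp only [hh', Function.comp_apply]
        exact Function.iterate_succ_apply' f n₁ (g x)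
      rw [hdec, hcommfh.comp_iterate]
    filter_upwards [hW N hN] with n hn
    rw [hiter n, Set.image_comp]
    exact (Set.image_mono (hWinv n)).trans hn
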